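/- Let αℕ denote the one-point compactification of the discrete space ℕ, with point at infinity ∞, and let G = C(αℕ, ℤ). Let H = {f ∈ G | f(∞) is even}; H is an additive subgroup of G closed under the pointwise lattice operations, and the constant function 2 belongs to H. Nevertheless, the constant function 2 does not belong to the additive subgroup of G generated by the set of elements of H that are singular in H, i.e., the set of f ∈ H such that 0 ≤ f and for every a ∈ H with 0 ≤ a ≤ f one has a ⊓ (f − a) = 0. Consequently, the unital ℓ-group (H, 2) is not a Specker ℓ-group, although it is a unital ℓ-subgroup of the unital Specker ℓ-group (G, 2). -/

import Mathlib

open OnePoint Filter Topology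

lemma exists_eq_infty (f : C(OnePoint ℕ, ℤ)) : ∃ n : ℕ, f n = f ∞ := by
  have hmap : Tendsto ((↑) : ℕ → OnePoint ℕ) atTop (𝓝 ∞) := by
    rw [← Nat.cofinite_eq_atTop, ← cocompact_eq_cofinite, ← coclosedCompact_eq_cocompact]
    exact tendsto_map.mono_right (by rw [nhds_infty_eq]; exact le_sup_left)
  have h : Tendsto (fun n : ℕ => f n) atTop (𝓝 (f ∞)) := (f.continuous.tendsto ∞).comp hmap
  rw [nhds_discrete, tendsto_pure] at h
  exact h.exists

lemma clopen_coe (n : ℕ) : IsClopen ({(n : OnePoint ℕ)} : Set (OnePoint ℕ)) := by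
  constructor
  · exact isClosed_singleton
  · have : ({(n : OnePoint ℕ)} : Set (OnePoint ℕ)) = (↑) '' {n} := by simp
    rw [this, OnePoint.isOpen_image_coe]
    exact isOpen_discrete _

noncomputable instance : DecidableEq (OnePoint ℕ) := Classical.decEq _

noncomputable def ind (n : ℕ) : C(OnePoint ℕ, ℤ) :=
  ⟨fun x => if x = (n : OnePoint ℕ) then 1 else 0, by
    apply continuous_if (fun a ha => ?_) continuous_const.continuousOn continuous_const.continuousOn
    rw [show {x : OnePoint ℕ | x = (n : OnePoint ℕ)} = {(n : OnePoint ℕ)} from rfl,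
      (clopen_coe n).frontier_eq] at ha
    exact absurd ha (Set.notMem_empty a)⟩

/-- The subgroup of `C(αℕ, ℤ)` of functions whose value at `∞` is even. -/
def Hsub : AddSubgroup C(OnePoint ℕ, ℤ) where
  carrier := {f : C(OnePoint ℕ, ℤ) | Even (f OnePoint.infty)}
  add_mem' := fun {a b} ha hb => by
    simp only [Set.mem_setOf_eq, ContinuousMap.add_apply] at *
    exact ha.add hb
  zero_mem' := by
    simp only [Set.mem_setOf_eq, ContinuousMap.zero_apply]
    exact ⟨0, by simp⟩
  neg_mem' := fun {a} ha => by
    simp only [Set.mem_setOf_eq, ContinuousMap.neg_apply] at *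
    exact ha.neg

/-- `Hsub` is a sublattice-subgroup of `G = C(αℕ, ℤ)` containing the constant
function `2`, yet `2` is not in the subgroup of `G` generated by the elements
of `Hsub` that are singular in `Hsub`. Hence `(Hsub, 2)` is a unital
ℓ-subgroup of the unital Specker ℓ-group `(G, 2)` that is not Specker. -/
theorem stmt18 :
    (∀ f g : C(OnePoint ℕ, ℤ), f ∈ Hsub → g ∈ Hsub →
      f ⊔ g ∈ Hsub ∧ f ⊓ g ∈ Hsub) ∧
    ContinuousMap.const (OnePoint ℕ) (2 : ℤ) ∈ Hsub ∧
    ContinuousMap.const (OnePoint ℕ) (2 : ℤ) ∉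
      AddSubgroup.closure {f : C(OnePoint ℕ, ℤ) | f ∈ Hsub ∧ 0 ≤ f ∧
        ∀ a : C(OnePoint ℕ, ℤ), a ∈ Hsub → 0 ≤ a → a ≤ f →
          a ⊓ (f - a) = 0} := by
  refine ⟨?_, ?_, ?_⟩
  · intro f g hf hg
    simp only [Hsub, AddSubgroup.mem_mk, AddSubmonoid.mem_mk, AddSubsemigroup.mem_mk, Set.mem_setOf_eq] at *
    constructor
    · rw [ContinuousMap.sup_apply f g]
      rcases max_choice (f ∞) (g ∞) with h | h <;> rw [h] <;> assumption
    · rw [ContinuousMap.inf_apply f g]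
      rcases min_choice (f ∞) (g ∞) with h | h <;> rw [h] <;> assumption
  · simp only [Hsub, AddSubgroup.mem_mk, Set.mem_setOf_eq, ContinuousMap.const_apply]
    exact ⟨1, rfl⟩
  · set φ : C(OnePoint ℕ, ℤ) →+ ℤ := AddMonoidHom.mk' (fun f => f ∞) (fun a b => rfl)
    intro hmem
    have hker : AddSubgroup.closure {f : C(OnePoint ℕ, ℤ) | f ∈ Hsub ∧ 0 ≤ f ∧
        ∀ a : C(OnePoint ℕ, ℤ), a ∈ Hsub → 0 ≤ a → a ≤ f →
          a ⊓ (f - a) = 0} ≤ φ.ker := by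
      rw [AddSubgroup.closure_le]
      rintro f ⟨hH, hpos, hsing⟩
      simp only [Hsub, AddSubgroup.mem_mk, Set.mem_setOf_eq] at hH
      have hpos' : (0 : ℤ) ≤ f ∞ := by
        have := ContinuousMap.le_def.mp hpos ∞; simpa using this
      simp only [SetLike.mem_coe, AddMonoidHom.mem_ker, AddMonoidHom.mk'_apply, φ]
      show f ∞ = 0
      by_contra hne
      have h2 : (2 : ℤ) ≤ f ∞ := by
        obtain ⟨k, hk⟩ := hH
        omega
      obtain ⟨n, hn⟩ := exists_eq_infty f
      have ha_mem : ind n ∈ Hsub := by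
        simp only [Hsub, AddSubgroup.mem_mk, AddSubmonoid.mem_mk, AddSubsemigroup.mem_mk, Set.mem_setOf_eq, ind, ContinuousMap.coe_mk]
        rw [if_neg (OnePoint.infty_ne_coe n)]
        exact Even.zero
      have ha_pos : (0 : C(OnePoint ℕ, ℤ)) ≤ ind n := by
        rw [ContinuousMap.le_def]
        intro x
        simp only [ind, ContinuousMap.coe_mk, ContinuousMap.zero_apply]
        split <;> omega
      have ha_le : ind n ≤ f := by
        rw [ContinuousMap.le_def]
        intro x
        simp only [ind, ContinuousMap.coe_mk]
        split_ifs with h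
        · rw [h, hn]; omega
        · exact ContinuousMap.le_def.mp hpos x
      have := congrFun (congrArg DFunLike.coe (hsing (ind n) ha_mem ha_pos ha_le)) (n : OnePoint ℕ)
      simp only [ContinuousMap.inf_apply, ContinuousMap.sub_apply, ContinuousMap.zero_apply,
        ind, ContinuousMap.coe_mk, if_pos rfl, hn] at this
      rw [min_def] at this
      split_ifs at this <;> omega
    have := hker hmem
    simp only [AddMonoidHom.mem_ker, AddMonoidHom.mk'_apply, ContinuousMap.const_apply, φ] at this
    exact two_ne_zero this
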